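/- Let {X_n} have periodic dependence with period d, satisfy AIM(x_n) with separation sequence q_n and mixing coefficients α_n, and suppose n·F̄(x_n) → τ > 0 as n → ∞. Then for each fixed integer k ≥ 1, writing n′ = ⌊n/k⌋, one has P(M_n ≤ x_n) − [P(M_{n′} ≤ x_n)]^k → 0 as n → ∞. -/

import Mathlib

open MeasureTheory Filter Finset Asymptotics

/-- Probability of an event as a real number. -/
noncomputable def pr {Ω : Type*} [MeasurableSpace Ω] (P : Measure Ω) (A : Set Ω) : ℝ :=
  (P A).toReal

/-- The event that `X i ≤ x` for every index `i` in the set `S`;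
this is the event `{M(S) ≤ x}` where `M(S) = max {X i : i ∈ S}`. -/
def allLe {Ω : Type*} (X : ℕ → Ω → ℝ) (S : Set ℕ) (x : ℝ) : Set Ω :=
  {ω | ∀ i ∈ S, X i ω ≤ x}

/-- `α` is a sequence of AIM mixing coefficients for `X` relative to thresholds `xs`
with separation sequence `q`: for any two intervals `I₁ = [a,b]`, `I₂ = [b+qₙ+1, c]`
contained in `{1,…,n}`, separated by `qₙ`, each of cardinality at least `qₙ`,
the maximum-based discrepancy is bounded by `α n`. -/
def AIMBound {Ω : Type*} [MeasurableSpace Ω] (P : Measure Ω) (X : ℕ → Ω → ℝ)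
    (xs : ℕ → ℝ) (q : ℕ → ℕ) (α : ℕ → ℝ) : Prop :=
  ∀ n a b c : ℕ, 1 ≤ a → a ≤ b → b + q n + 1 ≤ c → c ≤ n →
    q n ≤ b + 1 - a → q n ≤ c - (b + q n) →
    |pr P (allLe X (Set.Icc a b ∪ Set.Icc (b + q n + 1) c) (xs n)) -
      pr P (allLe X (Set.Icc a b) (xs n)) *
        pr P (allLe X (Set.Icc (b + q n + 1) c) (xs n))| ≤ α n

/-- `X` has periodic dependence with period `d`: any finite-dimensional joint
distribution is invariant under shifting all indices by `d`. -/
def PeriodicDep {Ω : Type*} [MeasurableSpace Ω] (P : Measure Ω) (X : ℕ → Ω → ℝ)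
    (d : ℕ) : Prop :=
  ∀ (k : ℕ) (t : Fin k → ℕ), (∀ i, 1 ≤ t i) →
    Measure.map (fun ω (i : Fin k) => X (t i) ω) P =
      Measure.map (fun ω (i : Fin k) => X (t i + d) ω) P

section helpers
variable {Ω : Type*} [MeasurableSpace Ω] (P : Measure Ω) [IsProbabilityMeasure P]
  (X : ℕ → Ω → ℝ)

lemma pr_nonneg (A : Set Ω) : 0 ≤ pr P A := ENNReal.toReal_nonneg

lemma pr_le_one (A : Set Ω) : pr P A ≤ 1 := by
  have h : P A ≤ 1 := prob_le_one
  simpa [pr] using ENNReal.toReal_mono ENNReal.one_ne_top h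

lemma pr_anti {S T : Set ℕ} (h : S ⊆ T) (x : ℝ) :
    pr P (allLe X T x) ≤ pr P (allLe X S x) :=
  ENNReal.toReal_mono (measure_ne_top P _)
    (measure_mono (fun ω hω i hi => hω i (h hi)))

lemma pr_tail (F : ℝ → ℝ) (hmeas : ∀ i, Measurable (X i))
    (hF : ∀ i, 1 ≤ i → ∀ t : ℝ, pr P {ω | X i ω ≤ t} = F t)
    (i : ℕ) (hi : 1 ≤ i) (x : ℝ) : pr P {ω | x < X i ω} = 1 - F x := by
  have hms : MeasurableSet {ω | X i ω ≤ x} := (hmeas i) measurableSet_Iic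
  have h1 : {ω | x < X i ω} = {ω | X i ω ≤ x}ᶜ := by ext ω; simp [not_le]
  rw [h1, pr, measure_compl hms (measure_ne_top P _), measure_univ,
    ENNReal.toReal_sub_of_le prob_le_one ENNReal.one_ne_top, ENNReal.toReal_one,
    ← hF i hi x]
  rfl

lemma pr_allLe_le_add (x c : ℝ) {S T : Set ℕ} (A : Finset ℕ)
    (hA : ∀ i ∈ T, i ∉ S → i ∈ A)
    (htail : ∀ i ∈ A, pr P {ω | x < X i ω} ≤ c) :
    pr P (allLe X S x) ≤ pr P (allLe X T x) + A.card * c := by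
  have hsub : allLe X S x ⊆ allLe X T x ∪ ⋃ i ∈ A, {ω | x < X i ω} := by
    intro ω hω
    by_cases hT : ω ∈ allLe X T x
    · exact Or.inl hT
    · right
      simp only [allLe, Set.mem_setOf_eq, not_forall] at hT
      obtain ⟨i, hiT, hix⟩ := hT
      have hiS : i ∉ S := fun h => hix (hω i h)
      exact Set.mem_biUnion (hA i hiT hiS) (lt_of_not_ge hix)
  have h1 : P (allLe X S x) ≤ P (allLe X T x) + ∑ i ∈ A, P {ω | x < X i ω} :=
    (measure_mono hsub).trans ((measure_union_le _ _).trans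
      (by gcongr; exact measure_biUnion_finset_le A _))
  have hne : (∑ i ∈ A, P {ω | x < X i ω}) ≠ ⊤ :=
    (ENNReal.sum_lt_top.2 fun i _ => measure_lt_top P _).ne
  calc pr P (allLe X S x)
      ≤ (P (allLe X T x) + ∑ i ∈ A, P {ω | x < X i ω}).toReal :=
        ENNReal.toReal_mono (ENNReal.add_ne_top.2 ⟨measure_ne_top _ _, hne⟩) h1
    _ = pr P (allLe X T x) + ∑ i ∈ A, pr P {ω | x < X i ω} := by
        rw [ENNReal.toReal_add (measure_ne_top _ _) hne,
          ENNReal.toReal_sum (fun i _ => measure_ne_top _ _)]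
        rfl
    _ ≤ pr P (allLe X T x) + ∑ _i ∈ A, c :=
        add_le_add le_rfl (Finset.sum_le_sum htail)
    _ = pr P (allLe X T x) + A.card * c := by rw [Finset.sum_const, nsmul_eq_mul]

lemma measure_shift_d {d : ℕ} (hper : PeriodicDep P X d) (hmeas : ∀ i, Measurable (X i))
    (a b : ℕ) (ha : 1 ≤ a) (x : ℝ) :
    P (allLe X (Set.Icc (a + d) (b + d)) x) = P (allLe X (Set.Icc a b) x) := by
  rcases le_or_gt a b with hab | hab
  · obtain ⟨m, rfl⟩ : ∃ m, b = a + m := ⟨b - a, by omega⟩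
    set S : Set (Fin (m+1) → ℝ) := Set.pi Set.univ (fun _ => Set.Iic x) with hSdef
    have hS : MeasurableSet S := MeasurableSet.univ_pi fun _ => measurableSet_Iic
    have e : ∀ s : ℕ, allLe X (Set.Icc (a + s) (a + m + s)) x =
        (fun ω (i : Fin (m+1)) => X (a + i + s) ω) ⁻¹' S := by
      intro s; ext ω
      simp only [allLe, Set.mem_setOf_eq, Set.mem_preimage, hSdef, Set.mem_pi,
        Set.mem_univ, Set.mem_Iic, true_implies]
      constructor
      · intro h i
        exact h (a + i + s) (Set.mem_Icc.2 ⟨by omega, by have := i.isLt; omega⟩)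
      · intro h i hi
        rw [Set.mem_Icc] at hi
        obtain ⟨j, rfl⟩ : ∃ j : Fin (m+1), i = a + j + s :=
          ⟨⟨i - a - s, by omega⟩, by simp; omega⟩
        exact h j
    have key := hper (m+1) (fun i => a + i) (fun i => by show 1 ≤ a + ↑i; omega)
    have hf0 : Measurable (fun ω (i : Fin (m+1)) => X (a + i) ω) :=
      measurable_pi_lambda _ fun i => hmeas _
    have hfd : Measurable (fun ω (i : Fin (m+1)) => X (a + i + d) ω) :=
      measurable_pi_lambda _ fun i => hmeas _
    have e0 := e 0
    simp only [add_zero] at e0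
    rw [e d, e0, ← Measure.map_apply hf0 hS, ← Measure.map_apply hfd hS, ← key]
  · rw [Set.Icc_eq_empty (by omega : ¬ a + d ≤ b + d), Set.Icc_eq_empty (by omega : ¬ a ≤ b)]

lemma measure_shift_mul {d : ℕ} (hper : PeriodicDep P X d) (hmeas : ∀ i, Measurable (X i))
    (a b : ℕ) (ha : 1 ≤ a) (x : ℝ) (j : ℕ) :
    P (allLe X (Set.Icc (a + d * j) (b + d * j)) x) = P (allLe X (Set.Icc a b) x) := by
  induction j with
  | zero => simp
  | succ t ih =>
    have h := measure_shift_d P X hper hmeas (a + d*t) (b + d*t) (by omega) x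
    rw [show a + d*(t+1) = a + d*t + d by ring, show b + d*(t+1) = b + d*t + d by ring,
      h, ih]

lemma telescope (k : ℕ) (p : ℕ → ℝ) (ε : ℝ) (hp0 : 0 ≤ p 1) (hp1 : p 1 ≤ 1)
    (hstep : ∀ j, 1 ≤ j → j + 1 ≤ k → |p (j+1) - p j * p 1| ≤ ε) :
    ∀ j, 1 ≤ j → j ≤ k → |p j - p 1 ^ j| ≤ ((j:ℝ) - 1) * ε := by
  intro j hj
  induction j, hj using Nat.le_induction with
  | base => intro _; simp
  | succ m hm ih =>
    intro hmk
    have hstep' := hstep m hm hmk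
    have hε : 0 ≤ ε := (abs_nonneg _).trans hstep'
    have ihm := ih (by omega)
    have hm1 : (1:ℝ) ≤ m := by exact_mod_cast hm
    have h2 : |p m * p 1 - p 1 ^ (m+1)| ≤ ((m:ℝ)-1)*ε := by
      have he : p m * p 1 - p 1^(m+1) = (p m - p 1^m) * p 1 := by ring
      rw [he, abs_mul, abs_of_nonneg hp0]
      calc |p m - p 1^m| * p 1 ≤ (((m:ℝ)-1)*ε) * 1 :=
            mul_le_mul ihm hp1 hp0 (mul_nonneg (by linarith) hε)
        _ = ((m:ℝ)-1)*ε := mul_one _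
    calc |p (m+1) - p 1^(m+1)|
        ≤ |p (m+1) - p m * p 1| + |p m * p 1 - p 1^(m+1)| := abs_sub_le _ _ _
      _ ≤ ε + ((m:ℝ)-1)*ε := add_le_add hstep' h2
      _ = (((m+1:ℕ):ℝ) - 1)*ε := by push_cast; ring

end helpers

section key
open MeasureTheory Filter Finset Asymptotics
variable {Ω : Type*} [MeasurableSpace Ω] (P : Measure Ω) [IsProbabilityMeasure P]
  (X : ℕ → Ω → ℝ)

lemma key_bound (F : ℝ → ℝ) (xs : ℕ → ℝ) (q : ℕ → ℕ) (α : ℕ → ℝ)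
    (d : ℕ) (hd : 1 ≤ d) (hper : PeriodicDep P X d)
    (hmeas : ∀ i, Measurable (X i))
    (hF : ∀ i, 1 ≤ i → ∀ t : ℝ, pr P {ω | X i ω ≤ t} = F t)
    (hbd : AIMBound P X xs q α)
    (k : ℕ) (hk : 1 ≤ k) (n : ℕ) (hcond : 2 * q n + 1 ≤ n / k) :
    |pr P (allLe X (Set.Icc 1 n) (xs n)) -
        (pr P (allLe X (Set.Icc 1 (n / k)) (xs n))) ^ k| ≤
      ((k:ℝ) - 1) * (α n + (2*((q n : ℕ):ℝ) + 2*(d:ℝ)) * (1 - F (xs n)))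
        + (k:ℝ) * (1 - F (xs n)) := by
  set N := n / k with hN
  set Q := q n with hQ
  set Fb := 1 - F (xs n) with hFbdef
  have hFb0 : 0 ≤ Fb := by
    have h1 := hF 1 le_rfl (xs n)
    have h2 := pr_le_one P {ω | X 1 ω ≤ xs n}
    rw [h1] at h2
    simp only [hFbdef]
    linarith
  have htail : ∀ (A : Finset ℕ), (∀ i ∈ A, 1 ≤ i) →
      ∀ i ∈ A, pr P {ω | xs n < X i ω} ≤ Fb :=
    fun A h i hi => le_of_eq (pr_tail P X F hmeas hF i (h i hi) (xs n))
  set p : ℕ → ℝ := fun j => pr P (allLe X (Set.Icc 1 (j*N)) (xs n)) with hp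
  have hkN : k * N ≤ n := by rw [hN, mul_comm]; exact Nat.div_mul_le_self n k
  have step : ∀ j, 1 ≤ j → j + 1 ≤ k →
      |p (j+1) - p j * p 1| ≤ α n + (2*(Q:ℝ) + 2*(d:ℝ)) * Fb := by
    intro j hj hjk
    have hjN : N ≤ j*N := by
      calc N = 1*N := (one_mul N).symm
        _ ≤ j*N := Nat.mul_le_mul_right N hj
    have hj1N : (j+1)*N ≤ k*N := Nat.mul_le_mul_right N hjk
    have hmul : (j+1)*N = j*N + N := by ring
    set b := j*N - Q with hb
    have hbq : b + Q = j*N := by omega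
    have hAIM := hbd n 1 b ((j+1)*N) le_rfl (by omega) (by omega) (by omega)
      (by omega) (by omega)
    rw [show b + q n + 1 = j*N + 1 from by omega] at hAIM
    set u := pr P (allLe X (Set.Icc 1 b ∪ Set.Icc (j*N+1) ((j+1)*N)) (xs n)) with hu
    set v := pr P (allLe X (Set.Icc 1 b) (xs n)) with hv
    set w := pr P (allLe X (Set.Icc (j*N+1) ((j+1)*N)) (xs n)) with hw
    have hQFb0 : 0 ≤ (Q:ℝ) * Fb := mul_nonneg (Nat.cast_nonneg _) hFb0
    have hdFb0 : 0 ≤ (d:ℝ) * Fb := mul_nonneg (Nat.cast_nonneg _) hFb0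
    -- h1 : |p (j+1) - u| ≤ Q * Fb
    have hsub1 : (Set.Icc 1 b ∪ Set.Icc (j*N+1) ((j+1)*N) : Set ℕ) ⊆ Set.Icc 1 ((j+1)*N) := by
      intro i hi
      simp only [Set.mem_union, Set.mem_Icc] at hi ⊢
      omega
    have hA1 : p (j+1) ≤ u := by
      simp only [hp, hu]
      exact pr_anti P X hsub1 (xs n)
    have hA2 : u ≤ p (j+1) + ((Finset.Icc (b+1) (j*N)).card : ℝ) * Fb := by
      simp only [hp, hu]
      refine pr_allLe_le_add P X (xs n) Fb (Finset.Icc (b+1) (j*N)) ?_ (htail _ ?_)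
      · intro i hi hni
        simp only [Set.mem_Icc] at hi
        simp only [Set.mem_union, Set.mem_Icc] at hni
        rw [Finset.mem_Icc]
        omega
      · intro i hi
        rw [Finset.mem_Icc] at hi
        omega
    have hcard1 : (Finset.Icc (b+1) (j*N)).card = Q := by
      rw [Nat.card_Icc]; omega
    rw [hcard1] at hA2
    have h1 : |p (j+1) - u| ≤ (Q:ℝ) * Fb := by
      rw [abs_sub_le_iff]
      exact ⟨by linarith, by linarith⟩
    -- h2 : |v - p j| ≤ Q * Fb
    have hsub2 : (Set.Icc 1 b : Set ℕ) ⊆ Set.Icc 1 (j*N) := by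
      intro i hi
      simp only [Set.mem_Icc] at hi ⊢
      omega
    have hB1 : p j ≤ v := by
      simp only [hp, hv]
      exact pr_anti P X hsub2 (xs n)
    have hB2 : v ≤ p j + ((Finset.Icc (b+1) (j*N)).card : ℝ) * Fb := by
      simp only [hp, hv]
      refine pr_allLe_le_add P X (xs n) Fb (Finset.Icc (b+1) (j*N)) ?_ (htail _ ?_)
      · intro i hi hni
        simp only [Set.mem_Icc] at hi hni
        rw [Finset.mem_Icc]
        omega
      · intro i hi
        rw [Finset.mem_Icc] at hi
        omega
    rw [hcard1] at hB2
    have h2 : |v - p j| ≤ (Q:ℝ) * Fb := by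
      rw [abs_sub_le_iff]
      exact ⟨by linarith, by linarith⟩
    -- h3 : |w - p 1| ≤ 2d * Fb
    have hr : (j*N) % d < d := Nat.mod_lt _ (by omega)
    set r := (j*N) % d with hrdef
    have hmd : r + d * (j*N / d) = j*N := by
      have := Nat.mod_add_div (j*N) d
      omega
    have hw_eq : w = pr P (allLe X (Set.Icc (r+1) (r+N)) (xs n)) := by
      have hsh := measure_shift_mul P X hper hmeas (r+1) (r+N) (by omega) (xs n) (j*N / d)
      have e1 : j*N+1 = r+1 + d*(j*N/d) := by omega
      have e2 : (j+1)*N = r+N + d*(j*N/d) := by omega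
      have e : Set.Icc (j*N+1) ((j+1)*N) = Set.Icc (r+1 + d*(j*N/d)) (r+N + d*(j*N/d)) := by
        rw [e1, e2]
      rw [hw, e]
      exact congrArg ENNReal.toReal hsh
    have hp1N : p 1 = pr P (allLe X (Set.Icc 1 N) (xs n)) := by
      simp only [hp, one_mul]
    set C := pr P (allLe X (Set.Icc 1 (r+N)) (xs n)) with hC
    have hc1 : C ≤ pr P (allLe X (Set.Icc (r+1) (r+N)) (xs n)) := by
      rw [hC]
      refine pr_anti P X ?_ (xs n)
      intro i hi; simp only [Set.mem_Icc] at hi ⊢; omega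
    have hc2 : pr P (allLe X (Set.Icc (r+1) (r+N)) (xs n)) ≤ C + ((Finset.Icc 1 r).card : ℝ) * Fb := by
      rw [hC]
      refine pr_allLe_le_add P X (xs n) Fb (Finset.Icc 1 r) ?_ (htail _ ?_)
      · intro i hi hni
        simp only [Set.mem_Icc] at hi hni
        rw [Finset.mem_Icc]
        omega
      · intro i hi
        rw [Finset.mem_Icc] at hi
        omega
    have hc3 : C ≤ pr P (allLe X (Set.Icc 1 N) (xs n)) := by
      rw [hC]
      refine pr_anti P X ?_ (xs n)
      intro i hi; simp only [Set.mem_Icc] at hi ⊢; omega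
    have hc4 : pr P (allLe X (Set.Icc 1 N) (xs n)) ≤ C + ((Finset.Icc (N+1) (N+r)).card : ℝ) * Fb := by
      rw [hC]
      refine pr_allLe_le_add P X (xs n) Fb (Finset.Icc (N+1) (N+r)) ?_ (htail _ ?_)
      · intro i hi hni
        simp only [Set.mem_Icc] at hi hni
        rw [Finset.mem_Icc]
        omega
      · intro i hi
        rw [Finset.mem_Icc] at hi
        omega
    have hcr1 : (Finset.Icc 1 r).card = r := by rw [Nat.card_Icc]; omega
    have hcr2 : (Finset.Icc (N+1) (N+r)).card = r := by rw [Nat.card_Icc]; omega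
    rw [hcr1] at hc2
    rw [hcr2] at hc4
    have hrd : (r:ℝ) * Fb ≤ (d:ℝ) * Fb :=
      mul_le_mul_of_nonneg_right (by exact_mod_cast hr.le) hFb0
    have h3 : |w - p 1| ≤ 2*(d:ℝ)*Fb := by
      rw [hw_eq, hp1N, abs_sub_le_iff]
      exact ⟨by linarith, by linarith⟩
    -- bounds
    have hw0 : 0 ≤ w := by rw [hw]; exact pr_nonneg P _
    have hw1 : w ≤ 1 := by rw [hw]; exact pr_le_one P _
    have hpj0 : 0 ≤ p j := by simp only [hp]; exact pr_nonneg P _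
    have hpj1 : p j ≤ 1 := by simp only [hp]; exact pr_le_one P _
    have hdec : p (j+1) - p j * p 1 =
        (p (j+1) - u) + (u - v*w) + (v - p j)*w + (p j)*(w - p 1) := by ring
    have habs : |p (j+1) - p j * p 1| ≤
        |p (j+1) - u| + |u - v*w| + |(v - p j)*w| + |p j*(w - p 1)| := by
      rw [hdec]
      exact le_trans (abs_add_le _ _) (add_le_add
        (le_trans (abs_add_le _ _) (add_le_add (abs_add_le _ _) le_rfl)) le_rfl)
    have h4 : |(v - p j)*w| ≤ (Q:ℝ)*Fb := by
      rw [abs_mul, abs_of_nonneg hw0]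
      calc |v - p j| * w ≤ ((Q:ℝ)*Fb) * 1 := mul_le_mul h2 hw1 hw0 hQFb0
        _ = (Q:ℝ)*Fb := mul_one _
    have h5 : |p j*(w - p 1)| ≤ 2*(d:ℝ)*Fb := by
      rw [abs_mul, abs_of_nonneg hpj0]
      calc p j * |w - p 1| ≤ 1 * (2*(d:ℝ)*Fb) :=
            mul_le_mul hpj1 h3 (abs_nonneg _) zero_le_one
        _ = 2*(d:ℝ)*Fb := one_mul _
    linarith [h1, hAIM, h4, h5, habs]
  have hp0' : 0 ≤ p 1 := by simp only [hp]; exact pr_nonneg P _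
  have hp1'' : p 1 ≤ 1 := by simp only [hp]; exact pr_le_one P _
  have htel := telescope k p (α n + (2*(Q:ℝ)+2*(d:ℝ))*Fb) hp0' hp1'' step k hk le_rfl
  have hmodlt : n % k < k := Nat.mod_lt _ (by omega)
  have hmoddiv := Nat.mod_add_div n k
  have hi1 : |pr P (allLe X (Set.Icc 1 n) (xs n)) - p k| ≤ (k:ℝ)*Fb := by
    have hsubk : (Set.Icc 1 (k*N) : Set ℕ) ⊆ Set.Icc 1 n := by
      intro i hi; simp only [Set.mem_Icc] at hi ⊢; omega
    have hA1 : pr P (allLe X (Set.Icc 1 n) (xs n)) ≤ p k := by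
      simp only [hp]
      exact pr_anti P X hsubk (xs n)
    have hA2 : p k ≤ pr P (allLe X (Set.Icc 1 n) (xs n)) +
        ((Finset.Icc (k*N+1) n).card : ℝ) * Fb := by
      simp only [hp]
      refine pr_allLe_le_add P X (xs n) Fb _ ?_ (htail _ ?_)
      · intro i hi hni
        simp only [Set.mem_Icc] at hi hni
        rw [Finset.mem_Icc]
        omega
      · intro i hi
        rw [Finset.mem_Icc] at hi
        omega
    have hcard : ((Finset.Icc (k*N+1) n).card : ℝ) ≤ (k:ℝ) := by
      have hh : (Finset.Icc (k*N+1) n).card ≤ k := by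
        rw [Nat.card_Icc, hN]
        omega
      exact_mod_cast hh
    have hkFb : ((Finset.Icc (k*N+1) n).card : ℝ) * Fb ≤ (k:ℝ)*Fb :=
      mul_le_mul_of_nonneg_right hcard hFb0
    have hkFb0 : 0 ≤ (k:ℝ)*Fb := mul_nonneg (Nat.cast_nonneg _) hFb0
    rw [abs_sub_le_iff]
    exact ⟨by linarith, by linarith⟩
  have hp1N : pr P (allLe X (Set.Icc 1 N) (xs n)) = p 1 := by
    simp only [hp, one_mul]
  rw [hp1N]
  calc |pr P (allLe X (Set.Icc 1 n) (xs n)) - p 1 ^ k|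
      ≤ |pr P (allLe X (Set.Icc 1 n) (xs n)) - p k| + |p k - p 1 ^ k| := abs_sub_le _ _ _
    _ ≤ (k:ℝ)*Fb + ((k:ℝ)-1)*(α n + (2*(Q:ℝ)+2*(d:ℝ))*Fb) := add_le_add hi1 htel
    _ = ((k:ℝ) - 1) * (α n + (2*(Q:ℝ) + 2*(d:ℝ)) * Fb) + (k:ℝ) * Fb := by ring

end key


/-- first step of the proof of Theorem PeriodicThm: for a sequence
with periodic dependence satisfying AIM(xₙ) and `n·F̄(xₙ) → τ > 0`, for each fixed
`k ≥ 1`, with `n′ = ⌊n/k⌋`: `P(Mₙ ≤ xₙ) − [P(M_{n′} ≤ xₙ)]^k → 0`. -/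
theorem stmt14 {Ω : Type*} [MeasurableSpace Ω] (P : Measure Ω) [IsProbabilityMeasure P]
    (X : ℕ → Ω → ℝ) (F : ℝ → ℝ) (xs : ℕ → ℝ) (q : ℕ → ℕ) (α : ℕ → ℝ)
    (d : ℕ) (hd : 1 ≤ d) (hper : PeriodicDep P X d)
    (τ : ℝ) (hτ : 0 < τ)
    (hmeas : ∀ i, Measurable (X i))
    (hF : ∀ i, 1 ≤ i → ∀ t : ℝ, pr P {ω | X i ω ≤ t} = F t)
    (hqpos : ∀ m, 1 ≤ q m)
    (hq : (fun n : ℕ => (q n : ℝ)) =o[atTop] (fun n : ℕ => (n : ℝ)))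
    (hα : Tendsto α atTop (nhds 0))
    (hbd : AIMBound P X xs q α)
    (hFbar : Tendsto (fun n : ℕ => (n : ℝ) * (1 - F (xs n))) atTop (nhds τ))
    (k : ℕ) (hk : 1 ≤ k) :
    Tendsto (fun n : ℕ =>
      pr P (allLe X (Set.Icc 1 n) (xs n)) -
        (pr P (allLe X (Set.Icc 1 (n / k)) (xs n))) ^ k)
      atTop (nhds 0) := by
  have hn1 : ∀ᶠ n : ℕ in atTop, 1 ≤ n := eventually_ge_atTop 1
  -- F̄(xₙ) → 0
  have hFbto : Tendsto (fun n : ℕ => 1 - F (xs n)) atTop (nhds 0) := by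
    have h1 : Tendsto (fun n : ℕ => ((n:ℝ) * (1 - F (xs n))) * (n:ℝ)⁻¹) atTop
        (nhds (τ * 0)) :=
      hFbar.mul (tendsto_inv_atTop_zero.comp tendsto_natCast_atTop_atTop)
    rw [mul_zero] at h1
    refine Tendsto.congr' ?_ h1
    filter_upwards [hn1] with n hn
    have hne : (n:ℝ) ≠ 0 := Nat.cast_ne_zero.2 (by omega)
    field_simp
  -- qₙ/n → 0
  have hqdiv : Tendsto (fun n : ℕ => (q n : ℝ) / n) atTop (nhds 0) := by
    refine (isLittleO_iff_tendsto' ?_).1 hq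
    filter_upwards [hn1] with n hn h
    exact absurd h (Nat.cast_ne_zero.2 (by omega))
  -- qₙ·F̄(xₙ) → 0
  have hqFb : Tendsto (fun n : ℕ => (q n : ℝ) * (1 - F (xs n))) atTop (nhds 0) := by
    have h1 := hqdiv.mul hFbar
    rw [zero_mul] at h1
    refine Tendsto.congr' ?_ h1
    filter_upwards [hn1] with n hn
    have hne : (n:ℝ) ≠ 0 := Nat.cast_ne_zero.2 (by omega)
    field_simp
  -- the explicit bound tends to 0
  have hB : Tendsto (fun n : ℕ =>
      ((k:ℝ) - 1) * (α n + (2*((q n : ℕ):ℝ) + 2*(d:ℝ)) * (1 - F (xs n)))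
        + (k:ℝ) * (1 - F (xs n))) atTop (nhds 0) := by
    have h := ((hα.const_mul ((k:ℝ)-1)).add
      ((hqFb.const_mul (2*((k:ℝ)-1))).add
        (hFbto.const_mul (((k:ℝ)-1)*(2*(d:ℝ)) + (k:ℝ)))))
    simp only [mul_zero, add_zero] at h
    exact h.congr fun n => by ring
  -- eventually the blocking condition holds
  have hcond : ∀ᶠ n : ℕ in atTop, 2 * q n + 1 ≤ n / k := by
    have hq' := hq.def (by positivity : (0:ℝ) < 1/(4*k))
    filter_upwards [hq', eventually_ge_atTop (2*k)] with n h1 h2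
    rw [Nat.le_div_iff_mul_le (by omega : 0 < k)]
    have h1' : (q n : ℝ) ≤ (1/(4*(k:ℝ))) * n := by
      simpa [Real.norm_natCast] using h1
    have h2' : (2*(k:ℝ)) ≤ n := by exact_mod_cast h2
    have hk' : (1:ℝ) ≤ k := by exact_mod_cast hk
    have e1 : (q n : ℝ) * k ≤ (n:ℝ)/4 := by
      calc (q n : ℝ)*k ≤ ((1/(4*(k:ℝ)))*n)*k := mul_le_mul_of_nonneg_right h1' (by positivity)
        _ = (n:ℝ)/4 := by field_simp
    have : ((2*q n + 1) * k : ℝ) ≤ n := by push_cast; nlinarith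
    exact_mod_cast this
  refine squeeze_zero_norm' ?_ hB
  filter_upwards [hcond] with n hn
  rw [Real.norm_eq_abs]
  exact key_bound P X F xs q α d hd hper hmeas hF hbd k hk n hn
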